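/- Suppose x lies in the relative interior of a face F of a convex set C ⊆ ℝⁿ, and x also lies in the interior of another convex set D ⊆ ℝⁿ. Then E := F ∩ D is a face of C ∩ D and dim E = dim F. -/

import Mathlib

open Set Metric RealInnerProductSpace

variable {E : Type*} [NormedAddCommGroup E] [NormedSpace ℝ E]

/-- A face of a convex set: a convex subset `F` of `C` such that any open segment of `C`
meeting `F` has both endpoints in `F`. -/
def IsFace (C F : Set E) : Prop := Convex ℝ F ∧ IsExtreme ℝ C F

/-- Dimension of a convex set: the dimension of its affine hull. -/
noncomputable def sdim (S : Set E) : ℕ := Module.finrank ℝ (affineSpan ℝ S).direction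

/-- The facial dimension signature: the set of dimensions of nonempty faces. -/
def faceDimSig (C : Set E) : Set ℕ :=
  {d | ∃ F : Set E, IsFace C F ∧ F.Nonempty ∧ sdim F = d}

/-- The minimal face of `C` containing `x`. -/
def minFace (C : Set E) (x : E) : Set E := ⋂₀ {F | IsFace C F ∧ x ∈ F}

theorem face_inter_interior {n : ℕ} (C D F : Set (EuclideanSpace ℝ (Fin n)))
    (hC : Convex ℝ C) (hD : Convex ℝ D) (hF : IsFace C F)
    (x : EuclideanSpace ℝ (Fin n)) (hx : x ∈ intrinsicInterior ℝ F) (hxD : x ∈ interior D) :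
    IsFace (C ∩ D) (F ∩ D) ∧ sdim (F ∩ D) = sdim F := by
  have hFC : F ⊆ C := hF.2.1
  have hxF : x ∈ F := intrinsicInterior_subset hx
  have hxD' : x ∈ D := interior_subset hxD
  refine ⟨⟨hF.1.inter hD, ⟨fun y hy => ⟨hFC hy.1, hy.2⟩,
      fun x1 hx1 x2 hx2 y hy hseg => ?_⟩⟩, ?_⟩
  · have h1 := hF.2.2 hx1.1 hx2.1 hy.1 hseg
    exact ⟨h1, hx1.2⟩
  · have hle : affineSpan ℝ (F ∩ D) ≤ affineSpan ℝ F :=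
      affineSpan_mono ℝ inter_subset_left
    have hge : affineSpan ℝ F ≤ affineSpan ℝ (F ∩ D) := by
      rw [affineSpan_le]
      intro y hyF
      obtain ⟨p, hp, hpx⟩ := hx
      obtain ⟨δ, hδpos, hδ⟩ := Metric.mem_nhds_iff.mp (mem_interior_iff_mem_nhds.mp hp)
      obtain ⟨ε, hεpos, hε⟩ := Metric.mem_nhds_iff.mp (mem_interior_iff_mem_nhds.mp hxD)
      by_cases hyx : y = x
      · subst hyx; exact subset_affineSpan ℝ _ ⟨hxF, hxD'⟩
      · set r := min δ ε with hr
        have hrpos : 0 < r := lt_min hδpos hεpos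
        have hdpos : 0 < dist y x := dist_pos.mpr hyx
        set s := r / (2 * dist y x) with hs
        have hspos : 0 < s := div_pos hrpos (by positivity)
        set z := s • (y - x) + x with hz
        have hzspan : z ∈ affineSpan ℝ F := by
          have := AffineSubspace.smul_vsub_vadd_mem (affineSpan ℝ F) s
            (subset_affineSpan ℝ F hyF) (subset_affineSpan ℝ F hxF)
            (subset_affineSpan ℝ F hxF)
          simpa [hz, vsub_eq_sub, vadd_eq_add] using this
        have hdist : dist z x = r / 2 := by
          rw [hz]
          rw [dist_eq_norm]
          simp only [add_sub_cancel_right, norm_smul, Real.norm_eq_abs,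
            abs_of_pos hspos]
          rw [hs, ← dist_eq_norm]
          field_simp
        have hdistr : dist z x < r := by rw [hdist]; linarith
        have hzF : z ∈ F := by
          have hmem : (⟨z, hzspan⟩ : affineSpan ℝ F) ∈ Metric.ball p δ := by
            rw [Metric.mem_ball, Subtype.dist_eq, hpx]
            exact lt_of_lt_of_le hdistr (min_le_left _ _)
          exact hδ hmem
        have hzD : z ∈ D := hε (by
          rw [Metric.mem_ball]
          exact lt_of_lt_of_le hdistr (min_le_right _ _))
        have hzmem : z ∈ affineSpan ℝ (F ∩ D) := subset_affineSpan ℝ _ ⟨hzF, hzD⟩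
        have hxmem : x ∈ affineSpan ℝ (F ∩ D) := subset_affineSpan ℝ _ ⟨hxF, hxD'⟩
        have := AffineSubspace.smul_vsub_vadd_mem (affineSpan ℝ (F ∩ D)) (1/s)
          hzmem hxmem hxmem
        have heq : (1/s) • (z - x) + x = y := by
          rw [hz]
          simp only [add_sub_cancel_right, smul_smul]
          rw [one_div, inv_mul_cancel₀ hspos.ne']
          simp
        have h2 : (1/s) • (z - x) + x ∈ affineSpan ℝ (F ∩ D) := by
          simpa [vsub_eq_sub, vadd_eq_add] using this
        rw [← heq]
        exact h2
    have hspan : affineSpan ℝ (F ∩ D) = affineSpan ℝ F := le_antisymm hle hge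
    unfold sdim
    rw [hspan]
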